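/- Let (W_t)_{t ≥ 1} be independent, identically distributed real-valued random variables, let α ≥ 1 be an integer and b > 0. Define the CuSum statistic c_0 = 0, c_t = max(c_{t−1} + W_t, 0), and the stopping time T = inf{ t ≥ 1 : c_t ≥ b }. Then for every integer ℓ ≥ 1, P[T > ℓα] ≤ ( P[ max_{1 ≤ i ≤ α} ∑_{j=i}^{α} W_j < b ] )^{ℓ}. -/

import Mathlib

open MeasureTheory ProbabilityTheory
open scoped ENNReal

noncomputable section

namespace QCDStmt

/-- The CuSum recursion `c 0 = 0`, `c (t+1) = max (c t + W t) 0`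
(here `W t` is the increment of the `(t+1)`-st observation). -/
def cusumW {Ω : Type*} (W : ℕ → Ω → ℝ) : ℕ → Ω → ℝ
  | 0 => fun _ => 0
  | t + 1 => fun ω => max (cusumW W t ω + W t ω) 0

/-- The CuSum stopping time `T = inf {t ≥ 1 : c t ≥ b}` (with `inf ∅ = ∞`). -/
def cusumWHit {Ω : Type*} (W : ℕ → Ω → ℝ) (b : ℝ) (ω : Ω) : ℕ∞ :=
  sInf {s : ℕ∞ | ∃ t : ℕ, s = (t : ℕ∞) ∧ 1 ≤ t ∧ b ≤ cusumW W t ω}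

lemma sum_le_cusumW {Ω : Type*} (W : ℕ → Ω → ℝ) (ω : Ω) :
    ∀ t i, i ≤ t → ∑ j ∈ Finset.Ico i t, W j ω ≤ cusumW W t ω := by
  intro t
  induction t with
  | zero => intro i hi; simp [cusumW, Nat.le_zero.mp hi]
  | succ t ih =>
      intro i hi
      rcases eq_or_lt_of_le hi with rfl | h
      · simp [cusumW]
      · have hit : i ≤ t := Nat.lt_succ_iff.mp h
        rw [Finset.sum_Ico_succ_top hit]
        calc ∑ j ∈ Finset.Ico i t, W j ω + W t ω
            ≤ cusumW W t ω + W t ω := by have := ih i hit; linarith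
          _ ≤ max (cusumW W t ω + W t ω) 0 := le_max_left _ _
          _ = cusumW W (t+1) ω := rfl

lemma sum_ite_eq_sum_Ico {Ω : Type*} (W : ℕ → Ω → ℝ) (ω : Ω) (α k : ℕ) (i : Fin α) :
    (∑ j : Fin α, if (i : ℕ) ≤ (j : ℕ) then W (k * α + j) ω else 0)
      = ∑ j ∈ Finset.Ico (k * α + i) (k * α + α), W j ω := by
  rw [Fin.sum_univ_eq_sum_range (fun j => if (i : ℕ) ≤ j then W (k * α + j) ω else 0) α]
  rw [← Finset.sum_filter]
  have hfil : (Finset.range α).filter (fun j => (i : ℕ) ≤ j) = Finset.Ico (i : ℕ) α := by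
    ext j; simp [Finset.mem_filter, Finset.mem_Ico, Finset.mem_range, and_comm]
  rw [hfil, Finset.sum_Ico_eq_sum_range, Finset.sum_Ico_eq_sum_range]
  have : k * α + α - (k * α + (i : ℕ)) = α - (i : ℕ) := by omega
  rw [this]
  exact Finset.sum_congr rfl (fun x _ => by rw [Nat.add_assoc])

lemma map_block_eq_pi {Ω : Type*} [MeasurableSpace Ω] (P : Measure Ω) [IsProbabilityMeasure P]
    (W : ℕ → Ω → ℝ) (hmeas : ∀ t, Measurable (W t))
    (hindep : iIndepFun W P)
    (hident : ∀ t, Measure.map (W t) P = Measure.map (W 0) P) (n k : ℕ) :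
    Measure.map (fun ω (i : Fin n) => W (k + i) ω) P
      = Measure.pi (fun _ : Fin n => Measure.map (W 0) P) := by
  haveI : IsProbabilityMeasure (Measure.map (W 0) P) :=
    Measure.isProbabilityMeasure_map (hmeas 0).aemeasurable
  refine (Measure.pi_eq fun s hs => ?_).symm
  have hF : Measurable (fun ω (i : Fin n) => W (k + i) ω) :=
    measurable_pi_lambda _ (fun i => hmeas _)
  rw [Measure.map_apply hF (MeasurableSet.univ_pi hs)]
  have hpre : (fun ω (i : Fin n) => W (k + i) ω) ⁻¹' Set.pi Set.univ s
      = ⋂ i : Fin n, W (k + (i : ℕ)) ⁻¹' s i := by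
    ext ω; simp [Set.mem_pi]
  rw [hpre]
  set sets : ℕ → Set ℝ := fun j => if h : k ≤ j ∧ j - k < n then s ⟨j - k, h.2⟩ else Set.univ
    with hsets_def
  have hkey : ∀ i : Fin n, sets (k + (i : ℕ)) = s i := by
    intro i
    have h1 : k ≤ k + (i : ℕ) ∧ (k + (i : ℕ)) - k < n := ⟨Nat.le_add_right _ _, by simp⟩
    rw [hsets_def]
    simp only [dif_pos h1]
    have h2 : (⟨k + (i : ℕ) - k, h1.2⟩ : Fin n) = i := Fin.ext (by simp)
    rw [h2]
  have hsets : ∀ j, MeasurableSet (sets j) := by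
    intro j; rw [hsets_def]
    by_cases h : k ≤ j ∧ j - k < n
    · simp only [dif_pos h]; exact hs _
    · simp only [dif_neg h]; exact MeasurableSet.univ
  have hinj : Function.Injective (fun i : Fin n => k + (i : ℕ)) := by
    intro i j h
    exact Fin.ext (Nat.add_left_cancel h)
  set S : Finset ℕ := Finset.image (fun i : Fin n => k + (i : ℕ)) Finset.univ with hS
  have hprod := hindep.measure_inter_preimage_eq_mul S (sets := sets) (fun j _ => hsets j)
  have hIeq : (⋂ j ∈ S, W j ⁻¹' sets j) = ⋂ i : Fin n, W (k + (i : ℕ)) ⁻¹' s i := by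
    ext ω
    simp only [Set.mem_iInter, hS, Finset.mem_image, Finset.mem_univ, true_and,
      Set.mem_preimage]
    constructor
    · intro h i
      have := h (k + (i : ℕ)) ⟨i, rfl⟩
      rwa [hkey i] at this
    · rintro h j ⟨i, rfl⟩
      rw [hkey i]; exact h i
  rw [hIeq] at hprod
  rw [hprod, hS, Finset.prod_image (fun i _ j _ h => hinj h)]
  refine Finset.prod_congr rfl (fun i _ => ?_)
  rw [hkey i, ← Measure.map_apply (hmeas _) (hs i), hident]

lemma meas_biInter_blocks {Ω : Type*} [mΩ : MeasurableSpace Ω] (P : Measure Ω)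
    [IsProbabilityMeasure P]
    (W : ℕ → Ω → ℝ) (hmeas : ∀ t, Measurable (W t))
    (hindep : iIndepFun W P) (α : ℕ) (E : ℕ → Set Ω)
    (hE : ∀ k, MeasurableSet[⨆ j ∈ Set.Ico (k * α) (k * α + α),
        MeasurableSpace.comap (W j) inferInstance] (E k)) :
    ∀ L, P (⋂ k ∈ Finset.range L, E k) = ∏ k ∈ Finset.range L, P (E k) := by
  set m : ℕ → MeasurableSpace Ω := fun j => MeasurableSpace.comap (W j) inferInstance with hm
  have h_le : ∀ j, m j ≤ mΩ := fun j => (hmeas j).comap_le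
  intro L
  induction L with
  | zero => simp
  | succ n ih =>
      have hdisj : Disjoint (Set.Ici (n * α)) (Set.Iio (n * α)) :=
        Set.disjoint_left.mpr (fun a ha hb => absurd (Set.mem_Iio.mp hb) (not_lt.mpr (Set.mem_Ici.mp ha)))
      have hindep2 : Indep (⨆ j ∈ Set.Ici (n * α), m j) (⨆ j ∈ Set.Iio (n * α), m j) P :=
        indep_iSup_of_disjoint h_le hindep.iIndep hdisj
      have hblock_le : ∀ k S, Set.Ico (k * α) (k * α + α) ⊆ S →
          (⨆ j ∈ Set.Ico (k * α) (k * α + α), m j) ≤ ⨆ j ∈ S, m j := by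
        intro k S hsub
        exact iSup₂_le fun j hj => le_biSup m (hsub hj)
      have hEbig : MeasurableSet[⨆ j ∈ Set.Ici (n * α), m j] (E n) :=
        hblock_le n _ (fun j hj => hj.1) _ (hE n)
      have hEsmall : MeasurableSet[⨆ j ∈ Set.Iio (n * α), m j] (⋂ k ∈ Finset.range n, E k) := by
        refine MeasurableSet.biInter (Finset.countable_toSet _) (fun k hk => ?_)
        have hk' : k < n := Finset.mem_range.mp hk
        refine hblock_le k _ (fun j hj => ?_) _ (hE k)
        have : k * α + α ≤ n * α := by
          calc k * α + α = (k + 1) * α := (Nat.succ_mul k α).symm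
            _ ≤ n * α := Nat.mul_le_mul_right α hk'
        exact lt_of_lt_of_le hj.2 this
      have hmul := (Indep_iff _ _ _).mp hindep2 (E n) (⋂ k ∈ Finset.range n, E k) hEbig hEsmall
      rw [Finset.range_add_one, Finset.set_biInter_insert, hmul, ih, Finset.prod_insert
        Finset.notMem_range_self]

/-- **Block tail bound for the CuSum stopping time.** If `W 0, W 1, …` are i.i.d.
(with `W j` playing the role of `W_{j+1}`), `α ≥ 1` and `b > 0`, then for every `ℓ ≥ 1`,
`P[T > ℓα] ≤ (P[max_{1 ≤ i ≤ α} ∑_{j=i}^{α} W_j < b])^ℓ`, where the inner maximum is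
`sSup ((fun i => ∑ j ∈ Finset.Ico i α, W j ω) '' Set.Iio α)` (indices shifted by one). -/
theorem cusum_block_tail_bound
    {Ω : Type*} [MeasurableSpace Ω] (P : Measure Ω) [IsProbabilityMeasure P]
    (W : ℕ → Ω → ℝ) (hmeas : ∀ t, Measurable (W t))
    (hindep : iIndepFun W P)
    (hident : ∀ t, Measure.map (W t) P = Measure.map (W 0) P)
    (α : ℕ) (hα : 1 ≤ α) (b : ℝ) (hb : 0 < b) (ℓ : ℕ) (hℓ : 1 ≤ ℓ) :
    P {ω | ((ℓ * α : ℕ) : ℕ∞) < cusumWHit W b ω} ≤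
      (P {ω | sSup ((fun i : ℕ => ∑ j ∈ Finset.Ico i α, W j ω) '' Set.Iio α) < b}) ^ ℓ := by
  classical
  -- the block event as a preimage
  set A : Set (Fin α → ℝ) :=
    {x | ∀ i : Fin α, (∑ j : Fin α, if (i : ℕ) ≤ (j : ℕ) then x j else 0) < b} with hA_def
  have hA : MeasurableSet A := by
    rw [hA_def]
    have hrw : {x : Fin α → ℝ | ∀ i : Fin α,
        (∑ j : Fin α, if (i : ℕ) ≤ (j : ℕ) then x j else 0) < b}
        = ⋂ i : Fin α, (fun x : Fin α → ℝ =>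
            ∑ j : Fin α, if (i : ℕ) ≤ (j : ℕ) then x j else 0) ⁻¹' Set.Iio b := by
      ext x; simp
    rw [hrw]
    refine MeasurableSet.iInter (fun i => ?_)
    have hf : Measurable (fun x : Fin α → ℝ =>
        ∑ j : Fin α, if (i : ℕ) ≤ (j : ℕ) then x j else 0) := by
      refine Finset.measurable_sum _ (fun j _ => ?_)
      by_cases h : (i : ℕ) ≤ (j : ℕ)
      · simpa [h] using measurable_pi_apply j
      · simpa [h] using measurable_const
    exact hf measurableSet_Iio
  set F : ℕ → Ω → Fin α → ℝ := fun k ω i => W (k * α + i) ω with hF_def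
  have hFmeas : ∀ k, Measurable (F k) := fun k => measurable_pi_lambda _ (fun i => hmeas _)
  set E : ℕ → Set Ω := fun k => F k ⁻¹' A with hE_def
  -- membership description of E k
  have hEmem : ∀ k ω, ω ∈ E k ↔
      ∀ i : Fin α, ∑ j ∈ Finset.Ico (k * α + i) (k * α + α), W j ω < b := by
    intro k ω
    simp only [hE_def, hF_def, hA_def, Set.mem_preimage, Set.mem_setOf_eq]
    constructor
    · intro h i; have := h i; rwa [sum_ite_eq_sum_Ico W ω α k i] at this
    · intro h i; rw [sum_ite_eq_sum_Ico W ω α k i]; exact h i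
  -- per-block measurability
  have hE : ∀ k, MeasurableSet[⨆ j ∈ Set.Ico (k * α) (k * α + α),
      MeasurableSpace.comap (W j) inferInstance] (E k) := by
    intro k
    set M := ⨆ j ∈ Set.Ico (k * α) (k * α + α),
      MeasurableSpace.comap (W j) inferInstance with hM
    have hrw : E k = ⋂ i : Fin α,
        (fun ω => ∑ j ∈ Finset.Ico (k * α + i) (k * α + α), W j ω) ⁻¹' Set.Iio b := by
      ext ω; simp only [Set.mem_iInter, Set.mem_preimage, Set.mem_Iio]; exact hEmem k ω
    rw [hrw]
    refine MeasurableSet.iInter (fun i => ?_)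
    have hWj : ∀ j ∈ Finset.Ico (k * α + (i : ℕ)) (k * α + α), Measurable[M] (W j) := by
      intro j hj
      rw [Finset.mem_Ico] at hj
      have hjmem : j ∈ Set.Ico (k * α) (k * α + α) := ⟨by omega, hj.2⟩
      exact measurable_iff_comap_le.mpr
        (le_biSup (fun j => MeasurableSpace.comap (W j) inferInstance) hjmem)
    have hsum : Measurable[M] (fun ω => ∑ j ∈ Finset.Ico (k * α + (i : ℕ)) (k * α + α), W j ω) :=
      Finset.measurable_sum _ hWj
    exact hsum measurableSet_Iio
  -- all blocks have the same probability
  have hPE : ∀ k, P (E k) = P (E 0) := by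
    intro k
    have h1 : ∀ k', P (E k') = Measure.pi (fun _ : Fin α => Measure.map (W 0) P) A := by
      intro k'
      rw [hE_def]
      simp only
      rw [← Measure.map_apply (hFmeas k') hA]
      rw [hF_def]
      exact congrFun (congrArg _ (map_block_eq_pi P W hmeas hindep hident α (k' * α))) A
    rw [h1 k, h1 0]
  -- the target set is E 0
  have htarget : {ω | sSup ((fun i : ℕ => ∑ j ∈ Finset.Ico i α, W j ω) '' Set.Iio α) < b}
      = E 0 := by
    ext ω
    have hbdd : BddAbove ((fun i : ℕ => ∑ j ∈ Finset.Ico i α, W j ω) '' Set.Iio α) :=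
      ((Set.finite_Iio α).image _).bddAbove
    have hne : ((fun i : ℕ => ∑ j ∈ Finset.Ico i α, W j ω) '' Set.Iio α).Nonempty :=
      Set.Nonempty.image _ ⟨0, hα⟩
    simp only [Set.mem_setOf_eq, Set.Finite.csSup_lt_iff ((Set.finite_Iio α).image _) hne, Set.forall_mem_image, Set.mem_Iio]
    rw [hEmem 0 ω]
    constructor
    · intro h i
      have h2 := h i.2
      simpa using h2
    · intro h i hi
      have h2 := h ⟨i, hi⟩
      simpa using h2
  -- the tail event is contained in the intersection of block events
  have hsub : {ω | ((ℓ * α : ℕ) : ℕ∞) < cusumWHit W b ω} ⊆ ⋂ k ∈ Finset.range ℓ, E k := by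
    intro ω hω
    simp only [Set.mem_iInter] at *
    intro k hk
    have hk' : k < ℓ := Finset.mem_range.mp hk
    rw [hEmem k ω]
    intro i
    set t := k * α + α with ht
    have hcus : cusumW W t ω < b := by
      by_contra hcon
      push_neg at hcon
      have hmem : (t : ℕ∞) ∈ {s : ℕ∞ | ∃ t' : ℕ, s = (t' : ℕ∞) ∧ 1 ≤ t' ∧ b ≤ cusumW W t' ω} :=
        ⟨t, rfl, by omega, hcon⟩
      have hle : cusumWHit W b ω ≤ (t : ℕ∞) := sInf_le hmem
      have htle : t ≤ ℓ * α := by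
        have h1 : (k + 1) * α ≤ ℓ * α := Nat.mul_le_mul_right α hk'
        have h2 : (k + 1) * α = k * α + α := by ring
        omega
      have : cusumWHit W b ω ≤ ((ℓ * α : ℕ) : ℕ∞) :=
        hle.trans (by exact_mod_cast Nat.cast_le.mpr htle)
      exact absurd (lt_of_lt_of_le hω this) (lt_irrefl _)
    calc ∑ j ∈ Finset.Ico (k * α + (i : ℕ)) (k * α + α), W j ω
        ≤ cusumW W t ω := sum_le_cusumW W ω t _ (by omega)
      _ < b := hcus
  calc P {ω | ((ℓ * α : ℕ) : ℕ∞) < cusumWHit W b ω}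
      ≤ P (⋂ k ∈ Finset.range ℓ, E k) := measure_mono hsub
    _ = ∏ k ∈ Finset.range ℓ, P (E k) :=
        meas_biInter_blocks P W hmeas hindep α E hE ℓ
    _ = ∏ _k ∈ Finset.range ℓ, P (E 0) := Finset.prod_congr rfl (fun k _ => hPE k)
    _ = P (E 0) ^ ℓ := by rw [Finset.prod_const, Finset.card_range]
    _ = (P {ω | sSup ((fun i : ℕ => ∑ j ∈ Finset.Ico i α, W j ω) '' Set.Iio α) < b}) ^ ℓ := by
        rw [htarget]


end QCDStmt
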